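/- The function K₁ = T₁² + T₂² + T₃² is a first integral of the Clebsch vector field X_s. -/

import Mathlib

/-- The Clebsch vector field `X_s` on ℝ⁶ = (Fin 3 → ℝ) × (Fin 3 → ℝ):
`X_s(S_α) = j_α (j_γ - j_β) T_β T_γ + (j_β - j_γ) S_β S_γ`,
`X_s(T_α) = j_β S_β T_γ - j_γ S_γ T_β`, with `(α, β, γ) = (α, α+1, α+2)` cyclically. -/
noncomputable def Xs (j : Fin 3 → ℝ) (p : (Fin 3 → ℝ) × (Fin 3 → ℝ)) :
    (Fin 3 → ℝ) × (Fin 3 → ℝ) :=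
  (fun α => j α * (j (α + 2) - j (α + 1)) * p.2 (α + 1) * p.2 (α + 2)
      + (j (α + 1) - j (α + 2)) * p.1 (α + 1) * p.1 (α + 2),
   fun α => j (α + 1) * p.1 (α + 1) * p.2 (α + 2)
      - j (α + 2) * p.1 (α + 2) * p.2 (α + 1))

/-- `K₁ = T₁² + T₂² + T₃²`. -/
noncomputable def K1fun (p : (Fin 3 → ℝ) × (Fin 3 → ℝ)) : ℝ :=
  ∑ α : Fin 3, p.2 α ^ 2

/-- The coordinate projection `p ↦ p.2 α` as a continuous linear map. -/
noncomputable def Tproj (α : Fin 3) :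
    ((Fin 3 → ℝ) × (Fin 3 → ℝ)) →L[ℝ] ℝ :=
  (ContinuousLinearMap.proj α).comp (ContinuousLinearMap.snd ℝ (Fin 3 → ℝ) (Fin 3 → ℝ))

lemma K1fun_hasFDerivAt (p : (Fin 3 → ℝ) × (Fin 3 → ℝ)) :
    HasFDerivAt K1fun (∑ α : Fin 3, ((2 : ℝ) * p.2 α ^ 1) • Tproj α) p := by
  have h : ∀ α : Fin 3, HasFDerivAt (fun q : (Fin 3 → ℝ) × (Fin 3 → ℝ) => Tproj α q ^ 2)
      (((2 : ℝ) * p.2 α ^ 1) • Tproj α) p := by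
    intro α
    have h1 := ((Tproj α).hasFDerivAt (x := p)).mul ((Tproj α).hasFDerivAt (x := p))
    have e1 : (fun q : (Fin 3 → ℝ) × (Fin 3 → ℝ) => Tproj α q ^ 2)
        = fun q => Tproj α q * Tproj α q := by
      funext q; ring
    have e2 : ((2 : ℝ) * p.2 α ^ 1) • Tproj α
        = Tproj α p • Tproj α + Tproj α p • Tproj α := by
      rw [pow_one, two_mul, add_smul]
      rfl
    rw [e1, e2]
    exact h1
  have := HasFDerivAt.fun_sum (fun α (_ : α ∈ Finset.univ) => h α)
  unfold K1fun
  simpa [K1fun, Tproj] using this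

theorem K1_first_integral_of_Xs (j : Fin 3 → ℝ)
    (p : (Fin 3 → ℝ) × (Fin 3 → ℝ)) :
    fderiv ℝ K1fun p (Xs j p) = 0 := by
  rw [(K1fun_hasFDerivAt p).fderiv]
  simp only [ContinuousLinearMap.sum_apply, ContinuousLinearMap.smul_apply, Tproj,
    ContinuousLinearMap.add_apply, ContinuousLinearMap.comp_apply,
    ContinuousLinearMap.proj_apply, ContinuousLinearMap.coe_snd', Xs,
    Fin.sum_univ_three, smul_eq_mul, Fin.reduceAdd, Fin.isValue]
  ring
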